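/- Let p : (X,T) → (Y,S) be a proximal extension between compact minimal systems. Then for every ε > 0, every n ≥ 1 and all pairs (x₁,x₁'),…,(xₙ,xₙ') ∈ X²_p there exists an integer k with d(Tᵏxᵢ, Tᵏxᵢ') < ε for all 1 ≤ i ≤ n. -/

import Mathlib

open Filter Topology

/-- for a proximal extension `p : (X,T) → (Y,S)` between compact minimal
systems, finitely many fibered pairs can be simultaneously brought `ε`-close by a
single power of `T`. -/
theorem proximal_simultaneous {X Y : Type*} [MetricSpace X] [CompactSpace X]
    [MetricSpace Y] [CompactSpace Y]
    (T : X ≃ₜ X) (S : Y ≃ₜ Y)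
    (hminX : ∀ x : X, Dense (Set.range fun n : ℤ => (T.toEquiv ^ n) x))
    (hminY : ∀ y : Y, Dense (Set.range fun n : ℤ => (S.toEquiv ^ n) y))
    (p : C(X, Y)) (hps : Function.Surjective p)
    (hfac : ∀ x : X, p (T x) = S (p x))
    (hprox : ∀ x x' : X, p x = p x' → ∀ δ : ℝ, 0 < δ →
      ∃ k : ℕ, 0 < k ∧ dist ((T.toEquiv ^ k) x) ((T.toEquiv ^ k) x') < δ) :
    ∀ (ε : ℝ), 0 < ε → ∀ (n : ℕ), 1 ≤ n → ∀ (x x' : Fin n → X),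
      (∀ i, p (x i) = p (x' i)) →
      ∃ k : ℤ, ∀ i, dist ((T.toEquiv ^ k) (x i)) ((T.toEquiv ^ k) (x' i)) < ε := by
  classical
  intro ε hε n hn x x' hfib
  -- continuity of integer powers of T
  have contT : ∀ k : ℤ, Continuous ⇑(T.toEquiv ^ k) := by
    intro k
    induction k using Int.induction_on with
    | zero => simpa using continuous_id
    | succ k ih =>
        have h : ⇑(T.toEquiv ^ ((k : ℤ) + 1)) = ⇑(T.toEquiv ^ (k : ℤ)) ∘ ⇑T := by
          ext z
          simp [zpow_add_one, Equiv.Perm.mul_apply]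
        rw [h]; exact ih.comp T.continuous
    | pred k ih =>
        have h : ⇑(T.toEquiv ^ (-(k : ℤ) - 1)) = ⇑(T.toEquiv ^ (-(k : ℤ))) ∘ ⇑T.symm := by
          ext z
          simp only [zpow_sub_one, Equiv.Perm.mul_apply, Function.comp_apply]
          rfl
        rw [h]; exact ih.comp T.symm.continuous
  -- intertwining for integer powers
  have hq : ∀ (k : ℤ) (z : X), p ((T.toEquiv ^ k) z) = (S.toEquiv ^ k) (p z) := by
    have hsymm : ∀ z : X, p (T.symm z) = S.symm (p z) := by
      intro z
      have h := hfac (T.symm z)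
      rw [T.apply_symm_apply] at h
      rw [h, S.symm_apply_apply]
    intro k
    induction k using Int.induction_on with
    | zero => simp
    | succ k ih =>
        intro z
        have h1 : (T.toEquiv ^ ((k : ℤ) + 1)) z = (T.toEquiv ^ (k : ℤ)) (T z) := by
          simp [zpow_add_one, Equiv.Perm.mul_apply]
        have h2 : (S.toEquiv ^ ((k : ℤ) + 1)) (p z) = (S.toEquiv ^ (k : ℤ)) (S (p z)) := by
          simp [zpow_add_one, Equiv.Perm.mul_apply]
        rw [h1, h2, ih (T z), hfac]
    | pred k ih =>
        intro z
        have h1 : (T.toEquiv ^ (-(k : ℤ) - 1)) z = (T.toEquiv ^ (-(k : ℤ))) (T.symm z) := by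
          simp only [zpow_sub_one, Equiv.Perm.mul_apply]
          rfl
        have h2 : (S.toEquiv ^ (-(k : ℤ) - 1)) (p z) = (S.toEquiv ^ (-(k : ℤ))) (S.symm (p z)) := by
          simp only [zpow_sub_one, Equiv.Perm.mul_apply]
          rfl
        rw [h1, h2, ih (T.symm z), hsymm]
  -- the orbit map on the product space
  let W := ((Fin n → X) × (Fin n → X))
  let Φ : ℤ → W → W := fun k w =>
    (fun i => (T.toEquiv ^ k) (w.1 i), fun i => (T.toEquiv ^ k) (w.2 i))
  have contΦ : ∀ k, Continuous (Φ k) := fun k =>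
    (continuous_pi fun i => (contT k).comp ((continuous_apply i).comp continuous_fst)).prodMk
      (continuous_pi fun i => (contT k).comp ((continuous_apply i).comp continuous_snd))
  have Φadd : ∀ (k m : ℤ) (w : W), Φ k (Φ m w) = Φ (k + m) w := by
    intro k m w
    have h : ∀ z : X, (T.toEquiv ^ k) ((T.toEquiv ^ m) z) = (T.toEquiv ^ (k + m)) z := by
      intro z
      rw [zpow_add]
      simp [Equiv.Perm.mul_apply]
    simp only [Φ]
    refine Prod.ext ?_ ?_ <;> funext i <;> exact h _
  let P : W := (x, x')
  let C : Set W := closure (Set.range fun k : ℤ => Φ k P)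
  have hCcomp : IsCompact C := isClosed_closure.isCompact
  have hCinv : ∀ m : ℤ, ∀ w ∈ C, Φ m w ∈ C := by
    intro m w hw
    have h1 : Φ m w ∈ Φ m '' C := ⟨w, hw, rfl⟩
    have h2 : Φ m '' C ⊆ closure (Φ m '' Set.range fun k : ℤ => Φ k P) :=
      image_closure_subset_closure_image (contΦ m)
    refine closure_mono ?_ (h2 h1)
    rintro _ ⟨_, ⟨k, rfl⟩, rfl⟩
    exact ⟨m + k, (Φadd m k P).symm⟩
  have hCfib : ∀ w ∈ C, ∀ i, p (w.1 i) = p (w.2 i) := by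
    have hcl : IsClosed {w : W | ∀ i, p (w.1 i) = p (w.2 i)} := by
      have : {w : W | ∀ i, p (w.1 i) = p (w.2 i)} =
          ⋂ i, {w : W | p (w.1 i) = p (w.2 i)} := by
        ext w; simp [Set.mem_iInter]
      rw [this]
      exact isClosed_iInter fun i =>
        isClosed_eq (p.continuous.comp ((continuous_apply i).comp continuous_fst))
          (p.continuous.comp ((continuous_apply i).comp continuous_snd))
    have hsub : (Set.range fun k : ℤ => Φ k P) ⊆ {w : W | ∀ i, p (w.1 i) = p (w.2 i)} := by
      rintro _ ⟨k, rfl⟩ i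
      simp only [Φ]
      rw [hq, hq, hfib]
    intro w hw
    exact closure_minimal hsub hcl hw
  -- key diagonalization step
  have key : ∀ m : ℕ, m ≤ n → ∃ w ∈ C, ∀ i : Fin n, (i : ℕ) < m → w.1 i = w.2 i := by
    intro m
    induction m with
    | zero =>
        intro _
        refine ⟨P, subset_closure ⟨0, ?_⟩, fun i hi => absurd hi (Nat.not_lt_zero _)⟩
        simp only [Φ]
        refine Prod.ext ?_ ?_ <;> funext i <;> simp
    | succ m ih =>
        intro hm
        obtain ⟨w, hwC, hwdiag⟩ := ih (Nat.le_of_succ_le hm)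
        set im : Fin n := ⟨m, hm⟩ with him
        have hfibm : p (w.1 im) = p (w.2 im) := hCfib w hwC im
        have hk : ∀ j : ℕ, ∃ k : ℕ, 0 < k ∧
            dist ((T.toEquiv ^ k) (w.1 im)) ((T.toEquiv ^ k) (w.2 im)) < 1 / (j + 1) := by
          intro j
          exact hprox _ _ hfibm (1 / (j + 1)) (by positivity)
        choose k hkpos hkdist using hk
        set u : ℕ → W := fun j => Φ (k j : ℤ) w with hu
        have huC : ∀ j, u j ∈ C := fun j => hCinv _ w hwC
        obtain ⟨z, hzC, φ, hφ, hlim⟩ := hCcomp.tendsto_subseq huC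
        have hlim1 : ∀ i : Fin n, Tendsto (fun j => (u (φ j)).1 i) atTop (𝓝 (z.1 i)) :=
          fun i => (((continuous_apply i).comp continuous_fst).tendsto z).comp hlim
        have hlim2 : ∀ i : Fin n, Tendsto (fun j => (u (φ j)).2 i) atTop (𝓝 (z.2 i)) :=
          fun i => (((continuous_apply i).comp continuous_snd).tendsto z).comp hlim
        refine ⟨z, hzC, ?_⟩
        intro i hi
        rcases Nat.lt_or_ge (i : ℕ) m with hlt | hge
        · -- previously diagonal coordinates stay diagonal
          have heq : ∀ j, (u (φ j)).1 i = (u (φ j)).2 i := by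
            intro j
            simp only [u, Φ]
            rw [hwdiag i hlt]
          have := tendsto_nhds_unique (hlim1 i) ((hlim2 i).congr fun j => (heq j).symm)
          exact this
        · -- the new coordinate
          have him2 : (im : ℕ) = m := rfl
          have hieq : i = im := Fin.ext (by rw [him2]; omega)
          rw [hieq]
          set i := im
          have hd1 : Tendsto (fun j => dist ((u (φ j)).1 i) ((u (φ j)).2 i)) atTop
              (𝓝 (dist (z.1 i) (z.2 i))) :=
            ((hlim1 i).dist (hlim2 i))
          have hd0 : Tendsto (fun j => dist ((u (φ j)).1 i) ((u (φ j)).2 i)) atTop (𝓝 0) := by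
            apply squeeze_zero (fun j => dist_nonneg)
              (g := fun j => 1 / ((φ j : ℝ) + 1))
            · intro j
              have hd := hkdist (φ j)
              have : dist ((u (φ j)).1 i) ((u (φ j)).2 i)
                  = dist ((T.toEquiv ^ (k (φ j))) (w.1 i)) ((T.toEquiv ^ (k (φ j))) (w.2 i)) := by
                simp only [u, Φ]
                rw [zpow_natCast]
              rw [this]
              exact le_of_lt hd
            · have h1 : Tendsto (fun j : ℕ => 1 / ((j : ℝ) + 1)) atTop (𝓝 0) :=
                tendsto_one_div_add_atTop_nhds_zero_nat
              exact h1.comp hφ.tendsto_atTop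
          have : dist (z.1 i) (z.2 i) = 0 := tendsto_nhds_unique hd1 hd0
          exact dist_eq_zero.mp this
  obtain ⟨w, hwC, hwdiag⟩ := key n le_rfl
  have hdiag : ∀ i : Fin n, w.1 i = w.2 i := fun i => hwdiag i i.isLt
  rw [Metric.mem_closure_iff] at hwC
  obtain ⟨b, ⟨kk, rfl⟩, hb⟩ := hwC (ε / 2) (by positivity)
  refine ⟨kk, fun i => ?_⟩
  have h1 : dist ((T.toEquiv ^ kk) (x i)) (w.1 i) ≤ dist w (Φ kk P) := by
    have hle : dist ((Φ kk P).1 i) (w.1 i) ≤ dist (Φ kk P).1 w.1 := dist_le_pi_dist _ _ i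
    calc dist ((T.toEquiv ^ kk) (x i)) (w.1 i) = dist ((Φ kk P).1 i) (w.1 i) := rfl
      _ ≤ dist (Φ kk P).1 w.1 := hle
      _ ≤ dist (Φ kk P) w := by rw [Prod.dist_eq]; exact le_max_left _ _
      _ = dist w (Φ kk P) := dist_comm _ _
  have h2 : dist (w.2 i) ((T.toEquiv ^ kk) (x' i)) ≤ dist w (Φ kk P) := by
    have hle : dist (w.2 i) ((Φ kk P).2 i) ≤ dist w.2 (Φ kk P).2 := dist_le_pi_dist _ _ i
    calc dist (w.2 i) ((T.toEquiv ^ kk) (x' i)) = dist (w.2 i) ((Φ kk P).2 i) := rfl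
      _ ≤ dist w.2 (Φ kk P).2 := hle
      _ ≤ dist w (Φ kk P) := by rw [Prod.dist_eq]; exact le_max_right _ _
  calc dist ((T.toEquiv ^ kk) (x i)) ((T.toEquiv ^ kk) (x' i))
      ≤ dist ((T.toEquiv ^ kk) (x i)) (w.1 i) + dist (w.1 i) ((T.toEquiv ^ kk) (x' i)) :=
        dist_triangle _ _ _
    _ = dist ((T.toEquiv ^ kk) (x i)) (w.1 i) + dist (w.2 i) ((T.toEquiv ^ kk) (x' i)) := by
        rw [hdiag i]
    _ ≤ dist w (Φ kk P) + dist w (Φ kk P) := add_le_add h1 h2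
    _ < ε / 2 + ε / 2 := by exact add_lt_add hb hb
    _ = ε := by ring
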